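/- arXiv:2512.01601 — 7 statements merged into one kernel-verified Lean document; each statement's English description precedes it below -/
import Mathlib

section
/- Let k ≥ 1 be an integer, let β > 0 and γ > 0 be reals, set p = (β+γ)k/2, and assume p > max{β, γ}. Let τ > 0, Ĉ > 0, C̃ > 0 be reals, and let X, Y, a, b, c, d be nonnegative reals satisfying X ≤ a^{1−β/p}·b^{β/p} and Y ≤ c^{1−γ/p}·d^{γ/p} (real powers). Then τ·X·Y ≤ C₁·a² + C₂·τ^{k}·b² + C₃·c² + C₄·τ^{k}·d², where C₁ = ((1−β/p)/2)·Ĉ^{1/(1−β/p)}, C₂ = (β/(2p))·Ĉ^{−p/β}, C₃ = ((1−γ/p)/2)·C̃^{1/(1−γ/p)}, and C₄ = (γ/(2p))·C̃^{−p/γ}. -/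
lemma helper_young (β p C t x y : ℝ) (hβ : 0 < β) (hβp : β < p) (hC : 0 < C)
    (ht : 0 ≤ t) (hx : 0 ≤ x) (hy : 0 ≤ y) :
    t ^ (β / p) * (x ^ (1 - β / p) * y ^ (β / p)) ^ 2 ≤
      (1 - β / p) * C ^ (1 / (1 - β / p)) * x ^ 2
        + (β / p) * C ^ (-(p / β)) * t * y ^ 2 := by
  have hp0 : 0 < p := hβ.trans hβp
  set w₁ : ℝ := 1 - β / p with hw₁def
  set w₂ : ℝ := β / p with hw₂def
  have hw₂ : 0 < w₂ := div_pos hβ hp0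
  have hw₁ : 0 < w₁ := by
    have : β / p < 1 := (div_lt_one hp0).mpr hβp
    simp only [hw₁def]; linarith
  have hsum : w₁ + w₂ = 1 := by simp [hw₁def, hw₂def]
  have h1 : (x ^ w₁) ^ 2 = (x ^ 2) ^ w₁ := by
    rw [← Real.rpow_natCast (x ^ w₁) 2, ← Real.rpow_natCast x 2,
      ← Real.rpow_mul hx, ← Real.rpow_mul hx]
    ring_nf
  have h2 : t ^ w₂ * (y ^ w₂) ^ 2 = (t * y ^ 2) ^ w₂ := by
    rw [Real.mul_rpow ht (by positivity), ← Real.rpow_natCast (y ^ w₂) 2,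
      ← Real.rpow_natCast y 2, ← Real.rpow_mul hy, ← Real.rpow_mul hy]
    ring_nf
  have hL : t ^ w₂ * (x ^ w₁ * y ^ w₂) ^ 2 = (x ^ 2) ^ w₁ * (t * y ^ 2) ^ w₂ := by
    rw [mul_pow, h1]
    calc t ^ w₂ * ((x ^ 2) ^ w₁ * (y ^ w₂) ^ 2)
        = (x ^ 2) ^ w₁ * (t ^ w₂ * (y ^ w₂) ^ 2) := by ring
      _ = (x ^ 2) ^ w₁ * (t * y ^ 2) ^ w₂ := by rw [h2]
  have key : (C ^ (1 / w₁) * x ^ 2) ^ w₁ * (C ^ (-(p / β)) * (t * y ^ 2)) ^ w₂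
      = (x ^ 2) ^ w₁ * (t * y ^ 2) ^ w₂ := by
    rw [Real.mul_rpow (by positivity) (by positivity),
      Real.mul_rpow (by positivity) (by positivity),
      ← Real.rpow_mul hC.le, ← Real.rpow_mul hC.le]
    have e1 : 1 / w₁ * w₁ = 1 := by field_simp
    have e2 : -(p / β) * w₂ = -1 := by
      rw [hw₂def]; field_simp
    rw [e1, e2, Real.rpow_one, Real.rpow_neg_one]
    have hC' : C ≠ 0 := hC.ne'
    field_simp
  have hyoung := Real.geom_mean_le_arith_mean2_weighted hw₁.le hw₂.le
    (by positivity : (0:ℝ) ≤ C ^ (1 / w₁) * x ^ 2)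
    (by positivity : (0:ℝ) ≤ C ^ (-(p / β)) * (t * y ^ 2)) hsum
  calc t ^ w₂ * (x ^ w₁ * y ^ w₂) ^ 2
      = (C ^ (1 / w₁) * x ^ 2) ^ w₁ * (C ^ (-(p / β)) * (t * y ^ 2)) ^ w₂ := by
        rw [hL, key]
    _ ≤ w₁ * (C ^ (1 / w₁) * x ^ 2) + w₂ * (C ^ (-(p / β)) * (t * y ^ 2)) := hyoung
    _ = w₁ * C ^ (1 / w₁) * x ^ 2 + w₂ * C ^ (-(p / β)) * t * y ^ 2 := by ring


set_option maxHeartbeats 1000000 in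
/-- The tuned form of Lemma 3.1 used in Theorem 3.3: with `p = (β+γ)k/2` both
τ-exponents equal `k`. `Chat` stands for Ĉ and `Ctil` for C̃.
All powers with real exponents are real (`rpow`) powers. -/
theorem stmt_3 (k : ℕ) (hk : 1 ≤ k) (β γ : ℝ) (hβ : 0 < β) (hγ : 0 < γ)
    (p : ℝ) (hpdef : p = (β + γ) * k / 2) (hpβ : β < p) (hpγ : γ < p)
    (τ Chat Ctil : ℝ) (hτ : 0 < τ) (hChat : 0 < Chat) (hCtil : 0 < Ctil)
    (X Y a b c d : ℝ)
    (hX0 : 0 ≤ X) (hY0 : 0 ≤ Y) (ha : 0 ≤ a) (hb : 0 ≤ b) (hc : 0 ≤ c) (hd : 0 ≤ d)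
    (hX : X ≤ a ^ (1 - β / p) * b ^ (β / p))
    (hY : Y ≤ c ^ (1 - γ / p) * d ^ (γ / p)) :
    τ * X * Y ≤
      ((1 - β / p) / 2) * Chat ^ (1 / (1 - β / p)) * a ^ 2
        + (β / (2 * p)) * Chat ^ (-(p / β)) * τ ^ (k : ℝ) * b ^ 2
        + ((1 - γ / p) / 2) * Ctil ^ (1 / (1 - γ / p)) * c ^ 2
        + (γ / (2 * p)) * Ctil ^ (-(p / γ)) * τ ^ (k : ℝ) * d ^ 2 := by
  have hbg : 0 < β + γ := by linarith
  have hbgne : β + γ ≠ 0 := hbg.ne'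
  have hk0 : (0:ℝ) < (k:ℝ) := by exact_mod_cast Nat.lt_of_lt_of_le Nat.zero_lt_one hk
  have hkne : (k:ℝ) ≠ 0 := hk0.ne'
  have hp0 : 0 < p := hβ.trans hpβ
  set t : ℝ := τ ^ (k : ℝ) with htdef
  have ht : 0 ≤ t := by positivity
  set U : ℝ := a ^ (1 - β / p) * b ^ (β / p) with hUdef
  set V : ℝ := c ^ (1 - γ / p) * d ^ (γ / p) with hVdef
  have hU : 0 ≤ U := by positivity
  have hV : 0 ≤ V := by positivity
  set e₁ : ℝ := β / (β + γ) with he₁def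
  set e₂ : ℝ := γ / (β + γ) with he₂def
  have hτsplit : τ = τ ^ e₁ * τ ^ e₂ := by
    rw [← Real.rpow_add hτ, show e₁ + e₂ = 1 by rw [he₁def, he₂def, ← add_div, div_self hbgne], Real.rpow_one]
  have hsq1 : (τ ^ e₁) ^ 2 = t ^ (β / p) := by
    rw [htdef, ← Real.rpow_natCast (τ ^ e₁) 2, ← Real.rpow_mul hτ.le,
      ← Real.rpow_mul hτ.le]
    congr 1
    rw [hpdef, he₁def]
    field_simp
    ring
  have hsq2 : (τ ^ e₂) ^ 2 = t ^ (γ / p) := by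
    rw [htdef, ← Real.rpow_natCast (τ ^ e₂) 2, ← Real.rpow_mul hτ.le,
      ← Real.rpow_mul hτ.le]
    congr 1
    rw [hpdef, he₂def]
    field_simp
    ring
  have hhβ := helper_young β p Chat t a b hβ hpβ hChat ht ha hb
  have hhγ := helper_young γ p Ctil t c d hγ hpγ hCtil ht hc hd
  rw [← hUdef] at hhβ
  rw [← hVdef] at hhγ
  have ex1 : (τ ^ e₁ * U) ^ 2 = t ^ (β / p) * U ^ 2 := by rw [mul_pow, hsq1]
  have ex2 : (τ ^ e₂ * V) ^ 2 = t ^ (γ / p) * V ^ 2 := by rw [mul_pow, hsq2]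
  have step1 : τ * X * Y ≤ τ * (U * V) := by
    have := mul_le_mul hX hY hY0 hU
    have h := mul_le_mul_of_nonneg_left this hτ.le
    linarith [h]
  calc τ * X * Y ≤ τ * (U * V) := step1
    _ = (τ ^ e₁ * U) * (τ ^ e₂ * V) := by
        rw [show (τ ^ e₁ * U) * (τ ^ e₂ * V) = (τ ^ e₁ * τ ^ e₂) * (U * V) from by ring,
          ← hτsplit]
    _ ≤ ((τ ^ e₁ * U) ^ 2 + (τ ^ e₂ * V) ^ 2) / 2 := by
        nlinarith [two_mul_le_add_sq (τ ^ e₁ * U) (τ ^ e₂ * V)]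
    _ = (t ^ (β / p) * U ^ 2 + t ^ (γ / p) * V ^ 2) / 2 := by
        rw [ex1, ex2]
    _ ≤ (((1 - β / p) * Chat ^ (1 / (1 - β / p)) * a ^ 2
          + (β / p) * Chat ^ (-(p / β)) * t * b ^ 2)
        + ((1 - γ / p) * Ctil ^ (1 / (1 - γ / p)) * c ^ 2
          + (γ / p) * Ctil ^ (-(p / γ)) * t * d ^ 2)) / 2 := by
        linarith [hhβ, hhγ]
    _ = ((1 - β / p) / 2) * Chat ^ (1 / (1 - β / p)) * a ^ 2
        + (β / (2 * p)) * Chat ^ (-(p / β)) * t * b ^ 2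
        + ((1 - γ / p) / 2) * Ctil ^ (1 / (1 - γ / p)) * c ^ 2
        + (γ / (2 * p)) * Ctil ^ (-(p / γ)) * t * d ^ 2 := by
        rw [show β / (2 * p) = (β / p) / 2 from by rw [div_div, mul_comm],
          show γ / (2 * p) = (γ / p) / 2 from by rw [div_div, mul_comm]]
        ring
end

section
/- Let k ≥ 1 be an integer. Let C*₀, …, C*_{k−1} be nonnegative real numbers with C*₀ = 1, and define C̄ⱼ = Σ_{l=j}^{k−1} C*_l for 0 ≤ j ≤ k−1. Let C_L, C₁, C₂, C₃, C₄, A be nonnegative real numbers satisfying 1 − C_L·(C₃ + C₁·C̄₀) ≥ C_L·C₃·C̄₁ and A − C_L·(C₄ + C₂·C̄₀) ≥ C_L·C₄·C̄₁. Let E : ℕ → ℝ and let a, b : ℕ → ℝ be nonnegative sequences such that for every n ≥ k: E_{n+1} − E_n + a_{n+1} + A·b_{n+1} ≤ C_L·(C₃ + C₁·C̄₀)·a_{n+1} + C_L·(C₄ + C₂·C̄₀)·b_{n+1} + C_L·C₃·Σ_{j=1}^{k−1} C*ⱼ·a_{n−j+1} + C_L·C₄·Σ_{j=1}^{k−1}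 C*ⱼ·b_{n−j+1}. Define the modified energy Ẽₙ = Eₙ + C_L·C₃·Σ_{j=1}^{k−1} C̄ⱼ·a_{n−j+1} + C_L·C₄·Σ_{j=1}^{k−1} C̄ⱼ·b_{n−j+1}. Then Ẽ_{n+1} ≤ Ẽₙ for every n ≥ k. -/
/-- Discrete core of Theorem 3.3 (unconditional energy stability): under the per-step
energy estimate (3.31) and the constant conditions (3.22)–(3.23), the modified energy
`Ẽₙ = Eₙ + C_L C₃ Σⱼ C̄ⱼ a_{n-j+1} + C_L C₄ Σⱼ C̄ⱼ b_{n-j+1}` decreases monotonically.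
Here `Cs j` stands for C*ⱼ and `Cbar j = Σ_{l=j}^{k-1} Cs l` for C̄ⱼ. -/
theorem stmt_6 (k : ℕ) (hk : 1 ≤ k)
    (Cs : ℕ → ℝ) (hCs : ∀ j < k, 0 ≤ Cs j) (hCs0 : Cs 0 = 1)
    (Cbar : ℕ → ℝ) (hCbar : ∀ j, Cbar j = ∑ l ∈ Finset.Ico j k, Cs l)
    (CL C1 C2 C3 C4 A : ℝ)
    (hCL : 0 ≤ CL) (hC1 : 0 ≤ C1) (hC2 : 0 ≤ C2) (hC3 : 0 ≤ C3) (hC4 : 0 ≤ C4)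
    (hA : 0 ≤ A)
    (hcond1 : CL * C3 * Cbar 1 ≤ 1 - CL * (C3 + C1 * Cbar 0))
    (hcond2 : CL * C4 * Cbar 1 ≤ A - CL * (C4 + C2 * Cbar 0))
    (E a b : ℕ → ℝ) (ha : ∀ n, 0 ≤ a n) (hb : ∀ n, 0 ≤ b n)
    (hstep : ∀ n, k ≤ n →
      E (n + 1) - E n + a (n + 1) + A * b (n + 1) ≤
        CL * (C3 + C1 * Cbar 0) * a (n + 1) + CL * (C4 + C2 * Cbar 0) * b (n + 1)
          + CL * C3 * ∑ j ∈ Finset.Ico 1 k, Cs j * a (n - j + 1)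
          + CL * C4 * ∑ j ∈ Finset.Ico 1 k, Cs j * b (n - j + 1)) :
    ∀ n, k ≤ n →
      E (n + 1) + CL * C3 * ∑ j ∈ Finset.Ico 1 k, Cbar j * a (n + 1 - j + 1)
          + CL * C4 * ∑ j ∈ Finset.Ico 1 k, Cbar j * b (n + 1 - j + 1)
        ≤ E n + CL * C3 * ∑ j ∈ Finset.Ico 1 k, Cbar j * a (n - j + 1)
          + CL * C4 * ∑ j ∈ Finset.Ico 1 k, Cbar j * b (n - j + 1) := by

  intro n hn
  have hCbark : Cbar k = 0 := by simp [hCbar]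
  have hsplit : ∀ j ∈ Finset.Ico 1 k, Cbar j = Cs j + Cbar (j + 1) := by
    intro j hj
    simp only [Finset.mem_Ico] at hj
    rw [hCbar j, hCbar (j + 1), Finset.sum_eq_sum_Ico_succ_bot hj.2]
  have shift : ∀ c : ℕ → ℝ,
      ∑ j ∈ Finset.Ico 1 k, Cbar j * c (n + 1 - j + 1)
        = Cbar 1 * c (n + 1)
          + ∑ j ∈ Finset.Ico 1 k, Cbar (j + 1) * c (n - j + 1) := by
    intro c
    have h1 : ∑ j ∈ Finset.Ico 1 k, Cbar j * c (n + 1 - j + 1)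
        = ∑ i ∈ Finset.range (k - 1), Cbar (i + 1) * c (n - i + 1) := by
      rw [Finset.sum_Ico_eq_sum_range]
      apply Finset.sum_congr rfl
      intro i _
      have e2 : n + 1 - (1 + i) + 1 = n - i + 1 := by omega
      simp only [show 1 + i = i + 1 from by omega,
        show n + 1 - (i + 1) + 1 = n - i + 1 from by omega]
    have h2 : Cbar 1 * c (n + 1)
          + ∑ j ∈ Finset.Ico 1 k, Cbar (j + 1) * c (n - j + 1)
        = ∑ j ∈ Finset.range k, Cbar (j + 1) * c (n - j + 1) := by
      rw [Finset.range_eq_Ico, Finset.sum_eq_sum_Ico_succ_bot hk]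
      simp
    rw [h1, h2]
    have hkk : k = (k - 1) + 1 := by omega
    rw [hkk, Finset.sum_range_succ]
    have hz : Cbar (k - 1 + 1) = 0 := by
      have e : k - 1 + 1 = k := by omega
      rw [e, hCbark]
    rw [hz]
    simp only [show k - 1 + 1 - 1 = k - 1 from by omega]
    ring
  have diff : ∀ c : ℕ → ℝ,
      ∑ j ∈ Finset.Ico 1 k, Cbar (j + 1) * c (n - j + 1)
        = ∑ j ∈ Finset.Ico 1 k, Cbar j * c (n - j + 1)
          - ∑ j ∈ Finset.Ico 1 k, Cs j * c (n - j + 1) := by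
    intro c
    rw [← Finset.sum_sub_distrib]
    apply Finset.sum_congr rfl
    intro j hj
    rw [hsplit j hj]; ring
  have ha' := ha (n + 1)
  have hb' := hb (n + 1)
  have h1 : CL * C3 * Cbar 1 * a (n + 1)
      ≤ (1 - CL * (C3 + C1 * Cbar 0)) * a (n + 1) :=
    mul_le_mul_of_nonneg_right hcond1 ha'
  have h2 : CL * C4 * Cbar 1 * b (n + 1)
      ≤ (A - CL * (C4 + C2 * Cbar 0)) * b (n + 1) :=
    mul_le_mul_of_nonneg_right hcond2 hb'
  have hs := hstep n hn
  rw [shift a, shift b, diff a, diff b]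
  nlinarith [hs, h1, h2]
end

section
/- Let k ≥ 2 be an integer, r ≥ 1 and τ > 0 real numbers, and let h₁, …, h_{k−1} be real numbers with τ/r ≤ hⱼ ≤ τ for each j. Define nodes s₀ = 0 and sᵢ = −(h₁ + ⋯ + hᵢ) for 1 ≤ i ≤ k−1, and let ℓᵢ be the associated Lagrange basis polynomials ℓᵢ(s) = ∏_{m≠i} (s − s_m)/(sᵢ − s_m). Then there exists a constant C depending only on k and r (and not on τ or the hⱼ) such that for every 0 ≤ i ≤ k−1 and every 0 ≤ j ≤ k−1, the coefficient ξ_{i,j} of s^j in ℓᵢ satisfies |ξ_{i,j}| ≤ C·τ^{−j}. -/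
open Polynomial Finset

lemma coeff_prod_X_sub_C_bound (a : ℕ → ℝ) (A : ℝ) (hA : 0 ≤ A) :
    ∀ (t : Finset ℕ), (∀ m ∈ t, |a m| ≤ A) → ∀ j,
      |(∏ m ∈ t, (X - C (a m))).coeff j| ≤ (t.card.choose j) * A ^ (t.card - j) := by
  intro t
  induction t using Finset.induction with
  | empty =>
    intro _ j
    rcases Nat.eq_zero_or_pos j with hj | hj
    · subst hj; simp
    · simp [Nat.choose_eq_zero_of_lt hj, coeff_one, hj.ne']
  | @insert m t hm ih =>
    intro hmem j
    have hIH := ih (fun x hx => hmem x (Finset.mem_insert_of_mem hx))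
    have ham : |a m| ≤ A := hmem m (Finset.mem_insert_self m t)
    rw [Finset.prod_insert hm, mul_comm, Finset.card_insert_of_notMem hm]
    set P := ∏ x ∈ t, (X - C (a x)) with hP
    set n := t.card with hn
    match j with
    | 0 =>
      rw [Polynomial.mul_coeff_zero]
      simp only [coeff_sub, coeff_X_zero, coeff_C_zero, zero_sub, mul_neg, abs_neg, abs_mul]
      have h1 := hIH 0
      simp only [Nat.choose_zero_right, Nat.cast_one, one_mul, Nat.sub_zero] at h1 ⊢
      calc |P.coeff 0| * |a m| ≤ A ^ n * A := by
            apply mul_le_mul h1 ham (abs_nonneg _) (pow_nonneg hA n)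
        _ = A ^ (n + 1) := (pow_succ A n).symm
    | jj + 1 =>
      rw [Polynomial.coeff_mul_X_sub_C, mul_comm (P.coeff (jj + 1)) (a m)]
      have h1 := hIH jj
      have h2 := hIH (jj + 1)
      have habs : |P.coeff jj - a m * P.coeff (jj + 1)| ≤
          |P.coeff jj| + |a m| * |P.coeff (jj + 1)| := by
        calc _ ≤ |P.coeff jj| + |a m * P.coeff (jj + 1)| := abs_sub _ _
          _ = _ := by rw [abs_mul]
      refine habs.trans ?_
      have hterm2 : |a m| * |P.coeff (jj + 1)| ≤
          (n.choose (jj + 1)) * A ^ (n - jj) := by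
        rcases le_or_gt (jj + 1) n with hle | hlt
        · calc |a m| * |P.coeff (jj + 1)| ≤ A * ((n.choose (jj + 1)) * A ^ (n - (jj + 1))) :=
              mul_le_mul ham h2 (abs_nonneg _) hA
            _ = (n.choose (jj + 1)) * (A * A ^ (n - (jj + 1))) := by ring
            _ = (n.choose (jj + 1)) * A ^ (n - jj) := by
                rw [← pow_succ']
                congr 2
                omega
        · have : n.choose (jj + 1) = 0 := Nat.choose_eq_zero_of_lt hlt
          rw [this] at h2 ⊢
          simp only [Nat.cast_zero, zero_mul] at h2 ⊢
          have := abs_nonneg (P.coeff (jj + 1))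
          nlinarith [abs_nonneg (a m)]
      have hcast : ((n + 1).choose (jj + 1) : ℝ) = n.choose jj + n.choose (jj + 1) := by
        rw [Nat.choose_succ_succ]; push_cast; ring
      have hsub : n + 1 - (jj + 1) = n - jj := by omega
      rw [hsub, hcast, add_mul]
      exact add_le_add h1 hterm2

/-- The coefficient bound ξ_{i,j} = O(τ^{-j}) asserted after (3.3): for the shifted
variable-step Lagrange basis polynomials with nodes `s₀ = 0`, `sᵢ = -(h₁ + ⋯ + hᵢ)`,
every coefficient of `ℓᵢ` in `s^j` is bounded by `C·τ^{-j}` with `C = C(k, r)`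
independent of `τ` and of the step sizes `hⱼ`. -/
theorem stmt_7 (k : ℕ) (hk : 2 ≤ k) (r : ℝ) (hr : 1 ≤ r) :
    ∃ C : ℝ, ∀ (τ : ℝ), 0 < τ → ∀ (h : ℕ → ℝ),
      (∀ j, 1 ≤ j → j ≤ k - 1 → τ / r ≤ h j ∧ h j ≤ τ) →
      ∀ i < k, ∀ j < k,
        |(Lagrange.basis (Finset.range k)
            (fun m => -(∑ l ∈ Finset.Icc 1 m, h l)) i).coeff j| ≤ C / τ ^ j := by
  classical
  set K : ℝ := ((k - 1 : ℕ) : ℝ)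
  have hK1 : (1 : ℝ) ≤ K := by
    show (1:ℝ) ≤ ((k - 1 : ℕ) : ℝ)
    exact_mod_cast (by omega : 1 ≤ k - 1)
  have hK0 : (0 : ℝ) ≤ K := le_trans zero_le_one hK1
  refine ⟨r ^ (k - 1) * (K ^ (k - 1) * K ^ (k - 1)), ?_⟩
  intro τ hτ h hh i hi j hj
  set v : ℕ → ℝ := fun m => -(∑ l ∈ Finset.Icc 1 m, h l) with hv
  have hr0 : (0 : ℝ) < r := lt_of_lt_of_le zero_lt_one hr
  have hτr : 0 < τ / r := div_pos hτ hr0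
  -- bounds on h
  have hhub : ∀ l, 1 ≤ l → l ≤ k - 1 → h l ≤ τ := fun l h1 h2 => (hh l h1 h2).2
  have hhlb : ∀ l, 1 ≤ l → l ≤ k - 1 → τ / r ≤ h l := fun l h1 h2 => (hh l h1 h2).1
  -- node bound
  have hvb : ∀ m < k, |v m| ≤ K * τ := by
    intro m hm
    have hnn : 0 ≤ ∑ l ∈ Finset.Icc 1 m, h l := by
      apply Finset.sum_nonneg
      intro l hl
      rw [Finset.mem_Icc] at hl
      exact le_trans hτr.le (hhlb l hl.1 (by omega))
    have hub : ∑ l ∈ Finset.Icc 1 m, h l ≤ m * τ := by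
      have := Finset.sum_le_card_nsmul (Finset.Icc 1 m) h τ
        (fun l hl => by rw [Finset.mem_Icc] at hl; exact hhub l hl.1 (by omega))
      rw [Nat.card_Icc] at this
      simpa [nsmul_eq_mul] using this
    have : |v m| = ∑ l ∈ Finset.Icc 1 m, h l := by
      rw [hv]; simp [abs_of_nonpos, hnn, abs_of_nonneg]
    rw [this]
    refine hub.trans ?_
    have hmK : (m : ℝ) ≤ K := by
      show (m:ℝ) ≤ ((k - 1 : ℕ) : ℝ)
      exact_mod_cast (by omega : m ≤ k - 1)
    exact mul_le_mul_of_nonneg_right hmK hτ.le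
  -- separation bound
  have hsep : ∀ i' < k, ∀ m < k, i' ≠ m → τ / r ≤ |v i' - v m| := by
    have key : ∀ i' m, i' < m → m < k → τ / r ≤ |v i' - v m| := by
      intro i' m him hm
      have hsum : ∑ l ∈ Finset.Icc 1 i', h l + ∑ l ∈ Finset.Ioc i' m, h l
          = ∑ l ∈ Finset.Icc 1 m, h l := by
        rw [show (Finset.Icc 1 i' : Finset ℕ) = Finset.Ioc 0 i' from
          (Finset.Icc_add_one_left_eq_Ioc 0 i').symm ▸ rfl,
          show (Finset.Icc 1 m : Finset ℕ) = Finset.Ioc 0 m from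
          (Finset.Icc_add_one_left_eq_Ioc 0 m).symm ▸ rfl]
        exact Finset.sum_Ioc_consecutive h (Nat.zero_le i') him.le
      have hdiff : v i' - v m = ∑ l ∈ Finset.Ioc i' m, h l := by
        rw [hv]; simp only; rw [← hsum]; ring
      have hlb : τ / r ≤ ∑ l ∈ Finset.Ioc i' m, h l := by
        have hcard := Finset.card_nsmul_le_sum (Finset.Ioc i' m) h (τ / r)
          (fun l hl => by
            rw [Finset.mem_Ioc] at hl
            exact hhlb l (by omega) (by omega))
        rw [Nat.card_Ioc, nsmul_eq_mul] at hcard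
        have h1 : (1 : ℝ) ≤ (m - i' : ℕ) := by
          have : 1 ≤ m - i' := by omega
          exact_mod_cast this
        nlinarith
      rw [hdiff]
      exact hlb.trans (le_abs_self _)
    intro i' hi' m hm hne
    rcases lt_or_gt_of_ne hne with hlt | hgt
    · exact key i' m hlt hm
    · rw [abs_sub_comm]; exact key m i' hgt hi'
  -- decompose the basis polynomial
  set t : Finset ℕ := (Finset.range k).erase i with ht
  have hit : i ∈ Finset.range k := Finset.mem_range.mpr hi
  have hcard : t.card = k - 1 := by rw [ht, Finset.card_erase_of_mem hit, Finset.card_range]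
  have hbasis : Lagrange.basis (Finset.range k) v i =
      Polynomial.C (∏ m ∈ t, (v i - v m)⁻¹) * ∏ m ∈ t, (Polynomial.X - Polynomial.C (v m)) := by
    rw [Lagrange.basis, ← ht]
    simp_rw [Lagrange.basisDivisor]
    rw [Finset.prod_mul_distrib, map_prod]
  rw [hbasis, Polynomial.coeff_C_mul, abs_mul]
  -- bound the constant
  have hconst : |∏ m ∈ t, (v i - v m)⁻¹| ≤ (r / τ) ^ (k - 1) := by
    rw [abs_prod, ← hcard, ← Finset.prod_const]
    apply Finset.prod_le_prod (fun m _ => abs_nonneg _)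
    intro m hm
    rw [ht, Finset.mem_erase, Finset.mem_range] at hm
    have hs := hsep i hi m hm.2 (Ne.symm hm.1)
    rw [abs_inv]
    rw [show r / τ = (τ / r)⁻¹ by rw [inv_div]]
    exact inv_anti₀ hτr hs
  -- bound the product coefficient
  have hjk : j ≤ k - 1 := by omega
  have hcoeff : |(∏ m ∈ t, (Polynomial.X - Polynomial.C (v m))).coeff j|
      ≤ ((k - 1).choose j) * (K * τ) ^ (k - 1 - j) := by
    have := coeff_prod_X_sub_C_bound v (K * τ) (mul_nonneg hK0 hτ.le) t
      (fun m hm => by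
        rw [ht, Finset.mem_erase, Finset.mem_range] at hm
        exact hvb m hm.2) j
    rwa [hcard] at this
  calc |∏ m ∈ t, (v i - v m)⁻¹| * |(∏ m ∈ t, (Polynomial.X - Polynomial.C (v m))).coeff j|
      ≤ (r / τ) ^ (k - 1) * (((k - 1).choose j) * (K * τ) ^ (k - 1 - j)) :=
        mul_le_mul hconst hcoeff (abs_nonneg _) (pow_nonneg (div_pos hr0 hτ).le _)
    _ ≤ r ^ (k - 1) * (K ^ (k - 1) * K ^ (k - 1)) / τ ^ j := by
        have hch : ((k - 1).choose j : ℝ) ≤ K ^ (k - 1) := by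
          calc ((k - 1).choose j : ℝ) ≤ (K : ℝ) ^ j := by
                have := Nat.choose_le_pow (k - 1) j
                calc ((k - 1).choose j : ℝ) ≤ ((k - 1 : ℕ) : ℝ) ^ j := by exact_mod_cast this
                  _ = K ^ j := rfl
            _ ≤ K ^ (k - 1) := pow_le_pow_right₀ hK1 hjk
        have hKe : K ^ (k - 1 - j) ≤ K ^ (k - 1) :=
          pow_le_pow_right₀ hK1 (Nat.sub_le _ _)
        have hτsplit : τ ^ (k - 1) = τ ^ (k - 1 - j) * τ ^ j := by
          rw [← pow_add, Nat.sub_add_cancel hjk]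
        rw [div_pow, mul_pow, div_mul_eq_mul_div, div_le_div_iff₀ (pow_pos hτ _) (pow_pos hτ _)]
        rw [hτsplit]
        have hKτ : (0:ℝ) ≤ K ^ (k - 1 - j) * τ ^ (k - 1 - j) := by positivity
        calc r ^ (k - 1) * (((k - 1).choose j) * (K ^ (k - 1 - j) * τ ^ (k - 1 - j))) * τ ^ j
            ≤ r ^ (k - 1) * ((K ^ (k - 1) * K ^ (k - 1-j)) * τ ^ (k - 1 - j)) * τ ^ j := by
              have : (((k - 1).choose j : ℝ)) * (K ^ (k - 1 - j) * τ ^ (k - 1 - j))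
                  ≤ (K ^ (k - 1) * K ^ (k - 1 - j)) * τ ^ (k - 1 - j) := by
                rw [← mul_assoc]
                exact mul_le_mul_of_nonneg_right
                  (mul_le_mul_of_nonneg_right hch (pow_nonneg hK0 _)) (pow_nonneg hτ.le _)
              exact mul_le_mul_of_nonneg_right
                (mul_le_mul_of_nonneg_left this (pow_nonneg hr0.le _)) (pow_nonneg hτ.le _)
          _ ≤ r ^ (k - 1) * ((K ^ (k - 1) * K ^ (k - 1)) * τ ^ (k - 1 - j)) * τ ^ j := by
              have : (K ^ (k-1) * K ^ (k - 1-j)) * τ ^ (k - 1 - j)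
                  ≤ (K ^ (k-1) * K ^ (k - 1)) * τ ^ (k - 1 - j) :=
                mul_le_mul_of_nonneg_right
                  (mul_le_mul_of_nonneg_left hKe (pow_nonneg hK0 _)) (pow_nonneg hτ.le _)
              exact mul_le_mul_of_nonneg_right
                (mul_le_mul_of_nonneg_left this (pow_nonneg hr0.le _)) (pow_nonneg hτ.le _)
          _ = r ^ (k - 1) * (K ^ (k - 1) * K ^ (k - 1)) * (τ ^ (k - 1 - j) * τ ^ j) := by ring
end

section
/- Let k ≥ 2 be an integer, r ≥ 1 and τ > 0 real numbers, and let h₁, …, h_{k−1} be real numbers with τ/r ≤ hⱼ ≤ τ for each j. Define nodes s₀ = 0 and sᵢ = −(h₁ + ⋯ + hᵢ) for 1 ≤ i ≤ k−1, and let ℓᵢ be the associated Lagrange basis polynomials ℓᵢ(s) = ∏_{m≠i} (s − s_m)/(sᵢ − s_m). Then for every 0 ≤ i ≤ k−1 and every s ∈ [0, τ], one has |ℓᵢ(s)| ≤ (k·r)^{k−1}. -/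
/-- The footnote of Section 3.1: the Lagrange basis polynomials with nodes `s₀ = 0`,
`sᵢ = -(h₁ + ⋯ + hᵢ)`, where `τ/r ≤ hⱼ ≤ τ`, are uniformly bounded by `(k·r)^{k-1}`
on the extrapolation interval `[0, τ]`. -/
theorem stmt_8 (k : ℕ) (hk : 2 ≤ k) (r : ℝ) (hr : 1 ≤ r)
    (τ : ℝ) (hτ : 0 < τ) (h : ℕ → ℝ)
    (hstep : ∀ j, 1 ≤ j → j ≤ k - 1 → τ / r ≤ h j ∧ h j ≤ τ) :
    ∀ i < k, ∀ s : ℝ, 0 ≤ s → s ≤ τ →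
      |Polynomial.eval s (Lagrange.basis (Finset.range k)
          (fun m => -(∑ l ∈ Finset.Icc 1 m, h l)) i)| ≤ ((k : ℝ) * r) ^ (k - 1) := by
  intro i hi s hs0 hsτ
  have hr0 : (0 : ℝ) < r := lt_of_lt_of_le one_pos hr
  have hτr : 0 < τ / r := div_pos hτ hr0
  set S : ℕ → ℝ := fun m => ∑ l ∈ Finset.Icc 1 m, h l with hS
  -- S nonneg and upper bound
  have hS_nonneg : ∀ m, m ≤ k - 1 → 0 ≤ S m := by
    intro m hm
    apply Finset.sum_nonneg
    intro l hl
    have hl' := Finset.mem_Icc.mp hl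
    exact le_trans hτr.le ((hstep l hl'.1 (le_trans hl'.2 hm)).1)
  have hS_ub : ∀ m, m ≤ k - 1 → S m ≤ (m : ℝ) * τ := by
    intro m hm
    calc S m ≤ ∑ l ∈ Finset.Icc 1 m, τ := by
          apply Finset.sum_le_sum
          intro l hl
          have hl' := Finset.mem_Icc.mp hl
          exact (hstep l hl'.1 (le_trans hl'.2 hm)).2
      _ = (m : ℝ) * τ := by
          rw [Finset.sum_const, Nat.card_Icc]
          simp
  -- difference lower bound
  have hdiff : ∀ a b : ℕ, a < b → b ≤ k - 1 → τ / r ≤ S b - S a := by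
    intro a b hab hb
    have hIcc : ∀ m : ℕ, Finset.Icc 1 m = Finset.Ioc 0 m := by
      intro m; rw [← Finset.Icc_add_one_left_eq_Ioc]; rfl
    have hsplit : S a + ∑ l ∈ Finset.Ioc a b, h l = S b := by
      simp only [hS, hIcc]
      exact Finset.sum_Ioc_consecutive _ (Nat.zero_le a) hab.le
    have hsum : τ / r ≤ ∑ l ∈ Finset.Ioc a b, h l := by
      calc τ / r = ∑ l ∈ Finset.Ioc a (a+1), τ / r := by simp
        _ ≤ ∑ l ∈ Finset.Ioc a b, τ / r := by
            apply Finset.sum_le_sum_of_subset_of_nonneg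
            · apply Finset.Ioc_subset_Ioc le_rfl hab
            · intro _ _ _; exact hτr.le
        _ ≤ ∑ l ∈ Finset.Ioc a b, h l := by
            apply Finset.sum_le_sum
            intro l hl
            have hl' := Finset.mem_Ioc.mp hl
            exact (hstep l (Nat.one_le_of_lt (Nat.lt_of_le_of_lt (Nat.zero_le a) hl'.1)) (le_trans hl'.2 hb)).1
    linarith
  -- per-factor bound
  have hfac : ∀ j ∈ (Finset.range k).erase i,
      |Polynomial.eval s (Lagrange.basisDivisor (-(S i)) (-(S j)))| ≤ (k : ℝ) * r := by
    intro j hj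
    have hji : j ≠ i := Finset.ne_of_mem_erase hj
    have hjk : j < k := Finset.mem_range.mp (Finset.mem_of_mem_erase hj)
    have hjk1 : j ≤ k - 1 := Nat.le_sub_one_of_lt hjk
    have hik1 : i ≤ k - 1 := Nat.le_sub_one_of_lt hi
    rw [Lagrange.basisDivisor]
    simp only [Polynomial.eval_mul, Polynomial.eval_C, Polynomial.eval_sub,
      Polynomial.eval_X]
    rw [abs_mul, abs_inv]
    have hden : τ / r ≤ |(-(S i)) - (-(S j))| := by
      rcases lt_or_gt_of_ne (Ne.symm hji) with hij | hij
      · have := hdiff i j hij hjk1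
        rw [abs_sub_comm]
        calc τ / r ≤ S j - S i := this
          _ ≤ |(-(S j)) - (-(S i))| := by
              rw [neg_sub_neg, abs_sub_comm]; exact le_abs_self _
      · have := hdiff j i hij hik1
        calc τ / r ≤ S i - S j := this
          _ ≤ |(-(S i)) - (-(S j))| := by
              rw [neg_sub_neg, abs_sub_comm]; exact le_abs_self _
    have hnum : |s - (-(S j))| ≤ (k : ℝ) * τ := by
      rw [sub_neg_eq_add, abs_of_nonneg (by linarith [hS_nonneg j hjk1])]
      have h1 : S j ≤ ((k : ℝ) - 1) * τ := by
        calc S j ≤ (j : ℝ) * τ := hS_ub j hjk1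
          _ ≤ ((k : ℝ) - 1) * τ := by
              apply mul_le_mul_of_nonneg_right _ hτ.le
              have : (j : ℝ) ≤ (k : ℝ) - 1 := by
                have : (j : ℝ) + 1 ≤ (k : ℝ) := by exact_mod_cast hjk
                linarith
              exact this
      linarith
    have hdpos : 0 < |(-(S i)) - (-(S j))| := lt_of_lt_of_le hτr hden
    calc |(-(S i)) - (-(S j))|⁻¹ * |s - (-(S j))|
        ≤ (τ / r)⁻¹ * ((k : ℝ) * τ) := by
          apply mul_le_mul _ hnum (abs_nonneg _) (by positivity)
          exact inv_anti₀ hτr hden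
      _ = (k : ℝ) * r := by field_simp
  -- combine
  rw [Lagrange.basis, Polynomial.eval_prod, Finset.abs_prod]
  have hcard : ((Finset.range k).erase i).card = k - 1 := by
    rw [Finset.card_erase_of_mem (Finset.mem_range.mpr hi), Finset.card_range]
  calc ∏ j ∈ (Finset.range k).erase i,
        |Polynomial.eval s (Lagrange.basisDivisor (-(S i)) (-(S j)))|
      ≤ ∏ j ∈ (Finset.range k).erase i, ((k : ℝ) * r) := by
        apply Finset.prod_le_prod
        · intro j _; exact abs_nonneg _
        · exact hfac
    _ = ((k : ℝ) * r) ^ (k - 1) := by rw [Finset.prod_const, hcard]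
end

section
/- Let k ≥ 2 be an integer, r ≥ 1 and τ > 0 real numbers, and let h₁, …, h_{k−1} be real numbers with τ/r ≤ hⱼ ≤ τ for each j. Define nodes s₀ = 0 and sᵢ = −(h₁ + ⋯ + hᵢ) for 1 ≤ i ≤ k−1, and let ℓᵢ be the associated Lagrange basis polynomials ℓᵢ(s) = ∏_{m≠i} (s − s_m)/(sᵢ − s_m). Then there exist constants C*₁, …, C*_{k−1} depending only on k and r (and not on τ, the hⱼ, or τ₀) such that for every real τ₀ with 0 < τ₀ ≤ τ and every 1 ≤ j ≤ k−1: (∫₀^{τ₀} (1 − Σ_{i=0}^{j−1} ℓᵢ(s))² ds)^{1/2} ≤ C*ⱼ·τ^{1/2}. -/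
/-- Estimate (3.18): the L²(0, τ₀) norms of the partial Lagrange-basis tails
`1 - Σ_{i<j} ℓᵢ(s)` are bounded by `C*ⱼ·τ^{1/2}`, with constants `C*ⱼ = Cs j`
depending only on `k` and `r`, independent of `τ`, of the step sizes `hⱼ`,
and of the current step size `τ₀ ≤ τ`. Nodes: `s₀ = 0`, `sᵢ = -(h₁ + ⋯ + hᵢ)`. -/
theorem stmt_9 (k : ℕ) (hk : 2 ≤ k) (r : ℝ) (hr : 1 ≤ r) :
    ∃ Cs : ℕ → ℝ, ∀ (τ : ℝ), 0 < τ → ∀ (h : ℕ → ℝ),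
      (∀ j, 1 ≤ j → j ≤ k - 1 → τ / r ≤ h j ∧ h j ≤ τ) →
      ∀ (τ₀ : ℝ), 0 < τ₀ → τ₀ ≤ τ →
      ∀ j, 1 ≤ j → j ≤ k - 1 →
        (∫ s in (0:ℝ)..τ₀,
            (1 - ∑ i ∈ Finset.range j,
              Polynomial.eval s (Lagrange.basis (Finset.range k)
                (fun m => -(∑ l ∈ Finset.Icc 1 m, h l)) i)) ^ 2) ^ ((1:ℝ)/2)
          ≤ Cs j * τ ^ ((1:ℝ)/2) := by
  classical
  have hr0 : (0:ℝ) < r := lt_of_lt_of_le one_pos hr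
  set B : ℝ := 1 + (k : ℝ) * ((k : ℝ) * r) ^ (k - 1) with hBdef
  refine ⟨fun _ => B, ?_⟩
  intro τ hτ h hh τ₀ hτ₀ hτ₀τ j hj1 hjk
  have hk2 : (2:ℝ) ≤ (k:ℝ) := by exact_mod_cast hk
  have hkr0 : (0:ℝ) ≤ ((k:ℝ) * r) ^ (k - 1) := by positivity
  have hB0 : 0 ≤ B := by nlinarith
  set v : ℕ → ℝ := fun m => -(∑ l ∈ Finset.Icc 1 m, h l) with hv
  have hτr : 0 < τ / r := div_pos hτ hr0
  -- sums of step sizes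
  have hsum_nonneg : ∀ m, m ≤ k - 1 → 0 ≤ ∑ l ∈ Finset.Icc 1 m, h l := by
    intro m hm
    refine Finset.sum_nonneg fun l hl => ?_
    rw [Finset.mem_Icc] at hl
    have := (hh l hl.1 (hl.2.trans hm)).1
    linarith
  have hsum_le : ∀ m, m ≤ k - 1 → ∑ l ∈ Finset.Icc 1 m, h l ≤ (m : ℝ) * τ := by
    intro m hm
    calc ∑ l ∈ Finset.Icc 1 m, h l ≤ ∑ l ∈ Finset.Icc 1 m, τ :=
          Finset.sum_le_sum fun l hl => by
            rw [Finset.mem_Icc] at hl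
            exact (hh l hl.1 (hl.2.trans hm)).2
      _ = ((Finset.Icc 1 m).card : ℝ) * τ := by rw [Finset.sum_const, nsmul_eq_mul]
      _ = (m : ℝ) * τ := by rw [Nat.card_Icc]; norm_num
  -- node separation
  have hsep : ∀ a b : ℕ, a < b → b ≤ k - 1 →
      τ / r ≤ (∑ l ∈ Finset.Icc 1 b, h l) - (∑ l ∈ Finset.Icc 1 a, h l) := by
    intro a b hab hb
    have hIcc : ∀ m : ℕ, Finset.Icc 1 m = Finset.Ioc 0 m := by
      intro m; rw [← Finset.Icc_add_one_left_eq_Ioc]; rfl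
    rw [hIcc a, hIcc b]
    have hsplit : (∑ l ∈ Finset.Ioc 0 a, h l) + (∑ l ∈ Finset.Ioc a b, h l)
        = ∑ l ∈ Finset.Ioc 0 b, h l :=
      Finset.sum_Ioc_consecutive _ (Nat.zero_le a) hab.le
    rw [← hsplit]
    have hmem : a + 1 ∈ Finset.Ioc a b := by
      rw [Finset.mem_Ioc]; omega
    have h1 : τ / r ≤ h (a + 1) := (hh (a+1) (by omega) (by omega)).1
    have h2 : h (a+1) ≤ ∑ l ∈ Finset.Ioc a b, h l := by
      refine Finset.single_le_sum (fun l hl => ?_) hmem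
      rw [Finset.mem_Ioc] at hl
      have := (hh l (by omega) (by omega)).1
      linarith
    linarith
  have habs_sep : ∀ i m : ℕ, i < k → m < k → i ≠ m → τ / r ≤ |v i - v m| := by
    intro i m hi hm him
    rcases lt_or_gt_of_ne him with hlt | hgt
    · have := hsep i m hlt (by omega)
      have : v i - v m = (∑ l ∈ Finset.Icc 1 m, h l) - (∑ l ∈ Finset.Icc 1 i, h l) := by
        simp [hv]; ring
      rw [this]
      rw [abs_of_nonneg (by linarith [hsep i m hlt (by omega : m ≤ k - 1)])]
      exact hsep i m hlt (by omega)
    · have heq : v i - v m = -((∑ l ∈ Finset.Icc 1 i, h l) - (∑ l ∈ Finset.Icc 1 m, h l)) := by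
        simp [hv]; ring
      rw [heq, abs_neg]
      rw [abs_of_nonneg (by linarith [hsep m i hgt (by omega : i ≤ k - 1)])]
      exact hsep m i hgt (by omega)
  -- bound on Lagrange basis evaluations
  have hbasis : ∀ s : ℝ, 0 ≤ s → s ≤ τ → ∀ i : ℕ, i < k →
      |Polynomial.eval s (Lagrange.basis (Finset.range k) v i)| ≤ ((k:ℝ) * r) ^ (k - 1) := by
    intro s hs0 hsτ i hi
    rw [Lagrange.basis, Polynomial.eval_prod, Finset.abs_prod]
    have hfac : ∀ m ∈ (Finset.range k).erase i,
        |Polynomial.eval s (Lagrange.basisDivisor (v i) (v m))| ≤ (k:ℝ) * r := by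
      intro m hm
      rw [Finset.mem_erase, Finset.mem_range] at hm
      have hmk : m ≤ k - 1 := by omega
      have hsep' : τ / r ≤ |v i - v m| := habs_sep i m hi hm.2 (Ne.symm hm.1)
      have hnum : |s - v m| ≤ (k:ℝ) * τ := by
        have h1 : 0 ≤ ∑ l ∈ Finset.Icc 1 m, h l := hsum_nonneg m hmk
        have h2 : ∑ l ∈ Finset.Icc 1 m, h l ≤ (m : ℝ) * τ := hsum_le m hmk
        have hm' : (m : ℝ) ≤ (k : ℝ) - 1 := by
          have : (m : ℝ) ≤ ((k - 1 : ℕ) : ℝ) := by exact_mod_cast hmk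
          rwa [Nat.cast_sub (by omega), Nat.cast_one] at this
        have : s - v m = s + ∑ l ∈ Finset.Icc 1 m, h l := by simp [hv]
        rw [this, abs_of_nonneg (by linarith)]
        nlinarith
      have heval : Polynomial.eval s (Lagrange.basisDivisor (v i) (v m))
          = (v i - v m)⁻¹ * (s - v m) := by
        simp [Lagrange.basisDivisor]
      rw [heval, abs_mul, abs_inv]
      have hpos : 0 < |v i - v m| := lt_of_lt_of_le hτr hsep'
      calc |v i - v m|⁻¹ * |s - v m| ≤ (τ / r)⁻¹ * ((k:ℝ) * τ) := by
            apply mul_le_mul (by exact inv_anti₀ hτr hsep') hnum (abs_nonneg _)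
              (by positivity)
        _ = (k:ℝ) * r := by field_simp
    calc ∏ m ∈ (Finset.range k).erase i,
          |Polynomial.eval s (Lagrange.basisDivisor (v i) (v m))|
        ≤ ∏ _m ∈ (Finset.range k).erase i, ((k:ℝ) * r) :=
          Finset.prod_le_prod (fun m _ => abs_nonneg _) hfac
      _ = ((k:ℝ) * r) ^ ((Finset.range k).erase i).card := by rw [Finset.prod_const]
      _ = ((k:ℝ) * r) ^ (k - 1) := by
          rw [Finset.card_erase_of_mem (Finset.mem_range.mpr hi), Finset.card_range]
  -- pointwise bound on the integrand
  have hpt : ∀ s : ℝ, 0 ≤ s → s ≤ τ →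
      (1 - ∑ i ∈ Finset.range j, Polynomial.eval s (Lagrange.basis (Finset.range k) v i)) ^ 2
        ≤ B ^ 2 := by
    intro s hs0 hsτ
    have habs : |1 - ∑ i ∈ Finset.range j,
        Polynomial.eval s (Lagrange.basis (Finset.range k) v i)| ≤ B := by
      have hsum : |∑ i ∈ Finset.range j,
          Polynomial.eval s (Lagrange.basis (Finset.range k) v i)|
            ≤ (j : ℝ) * ((k:ℝ) * r) ^ (k - 1) := by
        calc |∑ i ∈ Finset.range j,
              Polynomial.eval s (Lagrange.basis (Finset.range k) v i)|
            ≤ ∑ i ∈ Finset.range j,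
              |Polynomial.eval s (Lagrange.basis (Finset.range k) v i)| :=
              Finset.abs_sum_le_sum_abs _ _
          _ ≤ ∑ _i ∈ Finset.range j, ((k:ℝ) * r) ^ (k - 1) :=
              Finset.sum_le_sum fun i hi => by
                rw [Finset.mem_range] at hi
                exact hbasis s hs0 hsτ i (by omega)
          _ = (j : ℝ) * ((k:ℝ) * r) ^ (k - 1) := by
              rw [Finset.sum_const, nsmul_eq_mul, Finset.card_range]
      have hjk' : (j : ℝ) ≤ (k : ℝ) := by exact_mod_cast (by omega : j ≤ k)
      have : (j : ℝ) * ((k:ℝ) * r) ^ (k - 1) ≤ (k:ℝ) * ((k:ℝ) * r) ^ (k - 1) :=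
        mul_le_mul_of_nonneg_right hjk' hkr0
      calc |1 - ∑ i ∈ Finset.range j,
            Polynomial.eval s (Lagrange.basis (Finset.range k) v i)|
          ≤ |(1:ℝ)| + |∑ i ∈ Finset.range j,
            Polynomial.eval s (Lagrange.basis (Finset.range k) v i)| := abs_sub _ _
        _ ≤ 1 + (k:ℝ) * ((k:ℝ) * r) ^ (k - 1) := by
            rw [abs_one]; linarith
        _ = B := rfl
    calc (1 - ∑ i ∈ Finset.range j,
          Polynomial.eval s (Lagrange.basis (Finset.range k) v i)) ^ 2
        = |1 - ∑ i ∈ Finset.range j,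
          Polynomial.eval s (Lagrange.basis (Finset.range k) v i)| ^ 2 := (sq_abs _).symm
      _ ≤ B ^ 2 := pow_le_pow_left₀ (abs_nonneg _) habs 2
  -- continuity / integrability
  have hcont : Continuous fun s : ℝ =>
      (1 - ∑ i ∈ Finset.range j,
        Polynomial.eval s (Lagrange.basis (Finset.range k) v i)) ^ 2 := by
    apply Continuous.pow
    exact continuous_const.sub (continuous_finset_sum _ fun i _ =>
      (Lagrange.basis (Finset.range k) v i).continuous)
  -- integral bound
  have hint : (∫ s in (0:ℝ)..τ₀,
      (1 - ∑ i ∈ Finset.range j,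
        Polynomial.eval s (Lagrange.basis (Finset.range k) v i)) ^ 2) ≤ B ^ 2 * τ := by
    have h1 : (∫ s in (0:ℝ)..τ₀,
        (1 - ∑ i ∈ Finset.range j,
          Polynomial.eval s (Lagrange.basis (Finset.range k) v i)) ^ 2)
        ≤ ∫ _s in (0:ℝ)..τ₀, B ^ 2 := by
      apply intervalIntegral.integral_mono_on hτ₀.le
        (hcont.intervalIntegrable _ _) (intervalIntegrable_const)
      intro s hs
      exact hpt s hs.1 (hs.2.trans hτ₀τ)
    have h2 : (∫ _s in (0:ℝ)..τ₀, B ^ 2) = B ^ 2 * τ₀ := by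
      rw [intervalIntegral.integral_const]; simp [mul_comm]
    have h3 : B ^ 2 * τ₀ ≤ B ^ 2 * τ :=
      mul_le_mul_of_nonneg_left hτ₀τ (by positivity)
    linarith
  have hnn : 0 ≤ ∫ s in (0:ℝ)..τ₀,
      (1 - ∑ i ∈ Finset.range j,
        Polynomial.eval s (Lagrange.basis (Finset.range k) v i)) ^ 2 :=
    intervalIntegral.integral_nonneg hτ₀.le fun s _ => sq_nonneg _
  calc (∫ s in (0:ℝ)..τ₀,
        (1 - ∑ i ∈ Finset.range j,
          Polynomial.eval s (Lagrange.basis (Finset.range k) v i)) ^ 2) ^ ((1:ℝ)/2)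
      ≤ (B ^ 2 * τ) ^ ((1:ℝ)/2) := Real.rpow_le_rpow hnn hint (by norm_num)
    _ = B * τ ^ ((1:ℝ)/2) := by
        rw [Real.mul_rpow (by positivity) hτ.le]
        congr 1
        rw [← Real.rpow_natCast B 2, ← Real.rpow_mul hB0]
        norm_num
end

section
/- Let k ≥ 1 be an integer and K ≥ 0, B ≥ 0, r ≥ 1 real numbers. Let τ : ℕ → ℝ be a sequence of positive step sizes satisfying the local ratio bound τₙ ≤ r·τ_m for all n, m with |n − m| ≤ k−1, and let w : ℕ → ℝ be a nonnegative sequence such that wⱼ ≤ B for all 0 ≤ j ≤ k−1 and, for every m ≥ k−1, w_{m+1} ≤ B + K·Σ_{n=k−1}^{m} τₙ·(Σ_{i=0}^{k−1} w_{n−i}). Then for every m ≥ 0: w_m ≤ B·exp(k·r·K·Σ_{j=0}^{m−1} τⱼ). -/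
lemma tel_sum (f : ℕ → ℝ) (a : ℕ) : ∀ m, a ≤ m →
    ∑ n ∈ Finset.Icc a m, (f (n + 1) - f n) = f (m + 1) - f a := by
  intro m hm
  induction m, hm using Nat.le_induction with
  | base => simp
  | succ n hn ih =>
    rw [Finset.sum_Icc_succ_top (by omega : a ≤ n + 1), ih]
    ring

/-- The multi-step variable-step discrete Grönwall inequality, the step from (4.11) to
(4.13) in the convergence proof of Section 4: under the local time-step ratio bound
`τₙ ≤ r·τₘ` for `|n − m| ≤ k − 1`, the recursion
`w_{m+1} ≤ B + K·Σ_{n=k-1}^{m} τₙ·Σ_{i<k} w_{n-i}` with initial bound `wⱼ ≤ B` for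
`j < k` yields `w_m ≤ B·exp(k·r·K·Σ_{j<m} τⱼ)` for every `m`. -/
theorem stmt_11 (k : ℕ) (hk : 1 ≤ k) (K B r : ℝ)
    (hK : 0 ≤ K) (hB : 0 ≤ B) (hr : 1 ≤ r)
    (τ w : ℕ → ℝ) (hτ : ∀ n, 0 < τ n)
    (hratio : ∀ n m : ℕ, n ≤ m + (k - 1) → m ≤ n + (k - 1) → τ n ≤ r * τ m)
    (hw : ∀ n, 0 ≤ w n)
    (hinit : ∀ j < k, w j ≤ B)
    (hrec : ∀ m, k - 1 ≤ m →
      w (m + 1) ≤ B + K * ∑ n ∈ Finset.Icc (k - 1) m, τ n * ∑ i ∈ Finset.range k, w (n - i)) :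
    ∀ m, w m ≤ B * Real.exp ((k : ℝ) * r * K * ∑ j ∈ Finset.range m, τ j) := by
  set c : ℝ := (k : ℝ) * r * K with hc_def
  have hk0 : (0:ℝ) < (k:ℝ) := by exact_mod_cast hk
  have hc : 0 ≤ c := by positivity
  have hkK : (k : ℝ) * K ≤ c := by
    have : (k:ℝ) * 1 * K ≤ (k:ℝ) * r * K :=
      mul_le_mul_of_nonneg_right (mul_le_mul_of_nonneg_left hr (le_of_lt hk0)) hK
    simpa using this
  set S : ℕ → ℝ := fun m => ∑ j ∈ Finset.range m, τ j with hS_def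
  have hSnn : ∀ m, 0 ≤ S m := fun m =>
    Finset.sum_nonneg fun j _ => (hτ j).le
  have hSmono : ∀ {a b : ℕ}, a ≤ b → S a ≤ S b := by
    intro a b hab
    exact Finset.sum_le_sum_of_subset_of_nonneg (Finset.range_subset_range.2 hab)
      (fun j _ _ => (hτ j).le)
  intro m
  induction m using Nat.strong_induction_on with
  | _ m ih =>
    rcases lt_or_ge m k with hm | hm
    · have h1 : w m ≤ B := hinit m hm
      have h2 : (1:ℝ) ≤ Real.exp (c * S m) :=
        Real.one_le_exp (mul_nonneg hc (hSnn m))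
      calc w m ≤ B := h1
        _ ≤ B * Real.exp (c * S m) := le_mul_of_one_le_right hB h2
    · obtain ⟨m', rfl⟩ : ∃ m', m = m' + 1 := ⟨m - 1, by omega⟩
      have hm' : k - 1 ≤ m' := by omega
      -- bound each term of the sum
      have key : ∀ n ∈ Finset.Icc (k - 1) m',
          K * (τ n * ∑ i ∈ Finset.range k, w (n - i)) ≤
          B * (Real.exp (c * S (n + 1)) - Real.exp (c * S n)) := by
        intro n hn
        rw [Finset.mem_Icc] at hn
        have hinner : ∑ i ∈ Finset.range k, w (n - i) ≤
            (k : ℝ) * (B * Real.exp (c * S n)) := by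
          have : ∀ i ∈ Finset.range k, w (n - i) ≤ B * Real.exp (c * S n) := by
            intro i _
            have hlt : n - i < m' + 1 := by omega
            calc w (n - i) ≤ B * Real.exp (c * S (n - i)) := ih _ hlt
              _ ≤ B * Real.exp (c * S n) := by
                  apply mul_le_mul_of_nonneg_left _ hB
                  exact Real.exp_le_exp.2
                    (mul_le_mul_of_nonneg_left (hSmono (Nat.sub_le n i)) hc)
          calc ∑ i ∈ Finset.range k, w (n - i)
              ≤ ∑ _i ∈ Finset.range k, B * Real.exp (c * S n) :=
                Finset.sum_le_sum this
            _ = (k : ℝ) * (B * Real.exp (c * S n)) := by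
                rw [Finset.sum_const, Finset.card_range, nsmul_eq_mul]
        have hexp : Real.exp (c * S (n + 1)) - Real.exp (c * S n) =
            Real.exp (c * S n) * (Real.exp (c * τ n) - 1) := by
          have : S (n + 1) = S n + τ n := Finset.sum_range_succ τ n
          rw [this, mul_add, Real.exp_add]; ring
        have hct : c * τ n ≤ Real.exp (c * τ n) - 1 := by
          have := Real.add_one_le_exp (c * τ n)
          linarith
        have he0 : 0 < Real.exp (c * S n) := Real.exp_pos _
        calc K * (τ n * ∑ i ∈ Finset.range k, w (n - i))
            ≤ K * (τ n * ((k : ℝ) * (B * Real.exp (c * S n)))) := by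
              apply mul_le_mul_of_nonneg_left _ hK
              exact mul_le_mul_of_nonneg_left hinner (hτ n).le
          _ = ((k : ℝ) * K) * (τ n * (B * Real.exp (c * S n))) := by ring
          _ ≤ c * (τ n * (B * Real.exp (c * S n))) := by
              apply mul_le_mul_of_nonneg_right hkK
              exact mul_nonneg (hτ n).le (mul_nonneg hB (Real.exp_pos _).le)
          _ = B * (Real.exp (c * S n) * (c * τ n)) := by ring
          _ ≤ B * (Real.exp (c * S n) * (Real.exp (c * τ n) - 1)) := by
              apply mul_le_mul_of_nonneg_left _ hB
              exact mul_le_mul_of_nonneg_left hct he0.le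
          _ = B * (Real.exp (c * S (n + 1)) - Real.exp (c * S n)) := by
              rw [hexp]
      have hsum : K * ∑ n ∈ Finset.Icc (k - 1) m', τ n * ∑ i ∈ Finset.range k, w (n - i)
          ≤ B * (Real.exp (c * S (m' + 1)) - 1) := by
        rw [Finset.mul_sum]
        calc ∑ n ∈ Finset.Icc (k - 1) m', K * (τ n * ∑ i ∈ Finset.range k, w (n - i))
            ≤ ∑ n ∈ Finset.Icc (k - 1) m',
                B * (Real.exp (c * S (n + 1)) - Real.exp (c * S n)) :=
              Finset.sum_le_sum key
          _ = B * (Real.exp (c * S (m' + 1)) - Real.exp (c * S (k - 1))) := by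
              rw [← Finset.mul_sum, tel_sum (fun n => Real.exp (c * S n)) _ _ hm']
          _ ≤ B * (Real.exp (c * S (m' + 1)) - 1) := by
              apply mul_le_mul_of_nonneg_left _ hB
              have : (1:ℝ) ≤ Real.exp (c * S (k - 1)) :=
                Real.one_le_exp (mul_nonneg hc (hSnn _))
              linarith
      calc w (m' + 1)
          ≤ B + K * ∑ n ∈ Finset.Icc (k - 1) m', τ n * ∑ i ∈ Finset.range k, w (n - i) :=
            hrec m' hm'
        _ ≤ B + B * (Real.exp (c * S (m' + 1)) - 1) := by linarith
        _ = B * Real.exp (c * S (m' + 1)) := by ring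
end

section
/- Let E be a real inner product space. Then for all v, w ∈ E: ‖v/(1 + ‖v‖²) − w/(1 + ‖w‖²)‖ ≤ ‖v − w‖. That is, the map g(v) = (1 + ‖v‖²)^{−1}·v is 1-Lipschitz on E. -/
open RealInnerProductSpace

set_option maxHeartbeats 1000000 in
/-- The map `g(v) = (1 + ‖v‖²)⁻¹ • v` is 1-Lipschitz on a real inner product space;
this underlies the Lipschitz continuity (5.4) of the no-slope-selection nonlinearity. -/
theorem stmt_12 (E : Type*) [NormedAddCommGroup E] [InnerProductSpace ℝ E] (v w : E) :
    ‖(1 + ‖v‖ ^ 2)⁻¹ • v - (1 + ‖w‖ ^ 2)⁻¹ • w‖ ≤ ‖v - w‖ := by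
  set x : ℝ := ‖v‖ with hx
  set y : ℝ := ‖w‖ with hy
  set p : ℝ := ⟪v, w⟫ with hp
  have hx0 : (0:ℝ) ≤ x := norm_nonneg v
  have hy0 : (0:ℝ) ≤ y := norm_nonneg w
  have hap : (0:ℝ) < 1 + x ^ 2 := by positivity
  have hbp : (0:ℝ) < 1 + y ^ 2 := by positivity
  have hcs : abs p ≤ x * y := abs_real_inner_le_norm v w
  have habs := abs_le.mp hcs
  have e1 : ‖(1 + x ^ 2)⁻¹ • v - (1 + y ^ 2)⁻¹ • w‖ ^ 2
      = (1 + x ^ 2)⁻¹ ^ 2 * x ^ 2 - 2 * ((1 + x ^ 2)⁻¹ * (1 + y ^ 2)⁻¹ * p)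
        + (1 + y ^ 2)⁻¹ ^ 2 * y ^ 2 := by
    rw [@norm_sub_sq_real, real_inner_smul_left, real_inner_smul_right,
      norm_smul, norm_smul, mul_pow, mul_pow]
    simp only [Real.norm_eq_abs, abs_of_pos (inv_pos.mpr hap), abs_of_pos (inv_pos.mpr hbp),
      real_inner_self_eq_norm_sq]
    ring
  have e2 : ‖v - w‖ ^ 2 = x ^ 2 - 2 * p + y ^ 2 := by
    rw [@norm_sub_sq_real]
  have hab1 : (0:ℝ) ≤ (1 + x ^ 2) * (1 + y ^ 2) - (1 - x * y) := by
    nlinarith [mul_nonneg hx0 hy0, sq_nonneg (x*y)]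
  have hab2 : (0:ℝ) ≤ (1 + x ^ 2) * (1 + y ^ 2) + (1 - x * y) := by
    nlinarith [sq_nonneg (x - y), sq_nonneg (x*y)]
  have hab3 : (1:ℝ) ≤ (1 + x ^ 2) * (1 + y ^ 2) := by nlinarith [sq_nonneg (x*y)]
  have c1 : (0:ℝ) ≤ (x - y) ^ 2 * (((1 + x ^ 2) * (1 + y ^ 2) - (1 - x * y))
      * ((1 + x ^ 2) * (1 + y ^ 2) + (1 - x * y))) :=
    mul_nonneg (sq_nonneg _) (mul_nonneg hab1 hab2)
  have c2 : (0:ℝ) ≤ (x * y - p) * ((1 + x ^ 2) * (1 + y ^ 2))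
      * ((1 + x ^ 2) * (1 + y ^ 2) - 1) :=
    mul_nonneg (mul_nonneg (by linarith [habs.2]) (by positivity)) (by linarith)
  have hD : (1 + y ^ 2) ^ 2 * x ^ 2 - 2 * ((1 + x ^ 2) * (1 + y ^ 2) * p)
      + (1 + x ^ 2) ^ 2 * y ^ 2
      ≤ (1 + x ^ 2) ^ 2 * (1 + y ^ 2) ^ 2 * (x ^ 2 - 2 * p + y ^ 2) := by
    nlinarith [c1, c2]
  have key : ‖(1 + x ^ 2)⁻¹ • v - (1 + y ^ 2)⁻¹ • w‖ ^ 2 ≤ ‖v - w‖ ^ 2 := by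
    rw [e1, e2,
      ← mul_le_mul_iff_of_pos_right (show (0:ℝ) < (1 + x ^ 2) ^ 2 * (1 + y ^ 2) ^ 2 by positivity)]
    have expand : ((1 + x ^ 2)⁻¹ ^ 2 * x ^ 2 - 2 * ((1 + x ^ 2)⁻¹ * (1 + y ^ 2)⁻¹ * p)
          + (1 + y ^ 2)⁻¹ ^ 2 * y ^ 2) * ((1 + x ^ 2) ^ 2 * (1 + y ^ 2) ^ 2)
        = (1 + y ^ 2) ^ 2 * x ^ 2 - 2 * ((1 + x ^ 2) * (1 + y ^ 2) * p)
          + (1 + x ^ 2) ^ 2 * y ^ 2 := by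
      field_simp
    rw [expand]
    calc (1 + y ^ 2) ^ 2 * x ^ 2 - 2 * ((1 + x ^ 2) * (1 + y ^ 2) * p)
          + (1 + x ^ 2) ^ 2 * y ^ 2
        ≤ (1 + x ^ 2) ^ 2 * (1 + y ^ 2) ^ 2 * (x ^ 2 - 2 * p + y ^ 2) := hD
      _ = (x ^ 2 - 2 * p + y ^ 2) * ((1 + x ^ 2) ^ 2 * (1 + y ^ 2) ^ 2) := by ring
  nlinarith [norm_nonneg ((1 + x ^ 2)⁻¹ • v - (1 + y ^ 2)⁻¹ • w), norm_nonneg (v - w), key]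
end
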